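/- For every integer n ≥ 0, the identity of real polynomials U_n(x) + U_{n−1}(x) = ∏_{k=1}^{n} 2(x − cos(2kπ/(2n+1))) holds (for n = 0 the empty product is 1). Equivalently, the partial Chebyshev polynomial U^e_{2n}(x) = U_n(x) + U_{n−1}(x) has exactly the simple zeroes cos(2kπ/(2n+1)), 1 ≤ k ≤ n. -/

import Mathlib

open Polynomial Real

lemma U_deg_coeff (m : ℕ) :
    (Polynomial.Chebyshev.U ℝ (m : ℤ)).natDegree ≤ m ∧
    (Polynomial.Chebyshev.U ℝ (m : ℤ)).coeff m = 2 ^ m := by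
  induction m using Nat.twoStepInduction with
  | zero => simp [Polynomial.Chebyshev.U_zero]
  | one =>
    have h : Polynomial.Chebyshev.U ℝ ((1 : ℕ) : ℤ) = Polynomial.C 2 * Polynomial.X := by
      rw [Nat.cast_one, Polynomial.Chebyshev.U_one]; norm_cast
    constructor
    · rw [h]
      exact le_trans (Polynomial.natDegree_mul_le) (by simp)
    · rw [h, Polynomial.coeff_C_mul, Polynomial.coeff_X_one]; norm_num
  | more m ih1 ih2 =>
    have hcast : ((m + 2 : ℕ) : ℤ) = (m : ℤ) + 2 := by push_cast; ring
    have hcast1 : ((m + 1 : ℕ) : ℤ) = (m : ℤ) + 1 := by push_cast; ring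
    rw [hcast, Polynomial.Chebyshev.U_add_two]
    rw [hcast1] at ih2
    have h2 : (2 : ℝ[X]) = Polynomial.C 2 := by norm_cast
    have hmul : (2 : ℝ[X]) * Polynomial.X * Polynomial.Chebyshev.U ℝ ((m : ℤ) + 1) =
        Polynomial.C 2 * (Polynomial.X * Polynomial.Chebyshev.U ℝ ((m : ℤ) + 1)) := by
      rw [h2]; ring
    constructor
    · refine le_trans (Polynomial.natDegree_sub_le _ _) (max_le ?_ ?_)
      · rw [hmul]
        refine le_trans (Polynomial.natDegree_mul_le) ?_
        simp only [Polynomial.natDegree_C, zero_add]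
        refine le_trans (Polynomial.natDegree_mul_le) ?_
        have hx := Polynomial.natDegree_X_le (R := ℝ)
        have h2' := ih2.1
        omega
      · omega
    · rw [Polynomial.coeff_sub, hmul, Polynomial.coeff_C_mul,
        show m + 2 = (m + 1) + 1 from rfl, Polynomial.coeff_X_mul, ih2.2,
        Polynomial.coeff_eq_zero_of_natDegree_lt (lt_of_le_of_lt ih1.1 (by omega))]
      ring

/-- For every `n ≥ 0`, the partial Chebyshev polynomial
`U^e_{2n} = Uₙ + U_{n-1}` factors as `∏_{k=1}^{n} 2(x − cos(2kπ/(2n+1)))`. -/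
theorem partial_chebyshev_even_even_prod (n : ℕ) :
    Polynomial.Chebyshev.U ℝ (n : ℤ) + Polynomial.Chebyshev.U ℝ ((n : ℤ) - 1) =
      ∏ k ∈ Finset.Icc 1 n,
        (Polynomial.C 2 *
          (Polynomial.X - Polynomial.C (Real.cos (2 * k * π / (2 * n + 1))))) := by
  rcases Nat.eq_zero_or_pos n with rfl | hn
  · simp [Polynomial.Chebyshev.U_zero, Polynomial.Chebyshev.U_neg_one]
  set L : ℝ[X] := Polynomial.Chebyshev.U ℝ (n : ℤ) + Polynomial.Chebyshev.U ℝ ((n : ℤ) - 1)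
    with hL
  set r : ℕ → ℝ := fun k => Real.cos (2 * k * π / (2 * n + 1)) with hr
  set Rp : ℝ[X] := ∏ k ∈ Finset.Icc 1 n,
      (Polynomial.C 2 * (Polynomial.X - Polynomial.C (r k))) with hRp
  -- angles
  set θ : ℕ → ℝ := fun k => 2 * k * π / (2 * n + 1) with hθ
  have hden : (0 : ℝ) < 2 * n + 1 := by positivity
  have hθmem : ∀ k ∈ Finset.Icc 1 n, θ k ∈ Set.Icc 0 π := by
    intro k hk
    simp only [Finset.mem_Icc] at hk
    constructor
    · positivity
    · rw [div_le_iff₀ hden]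
      have hk' : (k : ℝ) ≤ n := by exact_mod_cast hk.2
      nlinarith [Real.pi_pos]
  have hθpos : ∀ k ∈ Finset.Icc 1 n, 0 < θ k := by
    intro k hk
    simp only [Finset.mem_Icc] at hk
    have : (1 : ℝ) ≤ k := by exact_mod_cast hk.1
    have := Real.pi_pos
    positivity
  have hθlt : ∀ k ∈ Finset.Icc 1 n, θ k < π := by
    intro k hk
    simp only [Finset.mem_Icc] at hk
    rw [div_lt_iff₀ hden]
    have hk' : (k : ℝ) ≤ n := by exact_mod_cast hk.2
    nlinarith [Real.pi_pos]
  -- the roots are distinct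
  have hinj : Set.InjOn (fun k => r k) (Finset.Icc 1 n : Finset ℕ) := by
    intro i hi j hj hij
    have h1 := Real.injOn_cos (hθmem i hi) (hθmem j hj) hij
    replace h1 : ((i : ℝ) = j ∨ π = 0) := by
      left
      simp only [hθ] at h1
      rw [div_left_inj' hden.ne'] at h1
      have hpi := Real.pi_pos
      have h3 : (2 * π) * i = (2 * π) * j := by linarith
      exact mul_left_cancel₀ (by positivity) h3
    rcases h1 with h | h
    · exact_mod_cast h
    · exact absurd h (ne_of_gt Real.pi_pos)
  -- L vanishes at each root
  have hLroot : ∀ k ∈ Finset.Icc 1 n, L.eval (r k) = 0 := by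
    intro k hk
    have hsin : Real.sin (θ k) ≠ 0 :=
      ne_of_gt (Real.sin_pos_of_pos_of_lt_pi (hθpos k hk) (hθlt k hk))
    have h1 := Polynomial.Chebyshev.U_real_cos (θ k) (n : ℤ)
    have h2 := Polynomial.Chebyshev.U_real_cos (θ k) ((n : ℤ) - 1)
    have hang : (n : ℝ) * θ k = -(((n : ℝ) + 1) * θ k) + k * (2 * π) := by
      rw [hθ]
      field_simp
      ring
    have hval : L.eval (r k) * Real.sin (θ k) = 0 := by
      have hrk : r k = Real.cos (θ k) := rfl
      rw [hL, Polynomial.eval_add, hrk, add_mul, h1, h2]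
      push_cast
      rw [sub_add_cancel, hang, Real.sin_add_nat_mul_two_pi, Real.sin_neg]
      ring
    exact (mul_eq_zero.mp hval).resolve_right hsin
  -- Rp vanishes at each root
  have hRroot : ∀ k ∈ Finset.Icc 1 n, Rp.eval (r k) = 0 := by
    intro k hk
    rw [hRp, Polynomial.eval_prod]
    exact Finset.prod_eq_zero hk (by simp)
  -- degree and leading coefficient facts
  have hfac_deg : ∀ k : ℕ,
      (Polynomial.C 2 * (Polynomial.X - Polynomial.C (r k)) : ℝ[X]).natDegree = 1 := by
    intro k
    rw [Polynomial.natDegree_C_mul (two_ne_zero), Polynomial.natDegree_X_sub_C]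
  have hfac_ne : ∀ k : ℕ,
      (Polynomial.C 2 * (Polynomial.X - Polynomial.C (r k)) : ℝ[X]) ≠ 0 := by
    intro k h
    have := hfac_deg k
    rw [h] at this
    simp at this
  have hcard : (Finset.Icc 1 n).card = n := by
    rw [Nat.card_Icc]; omega
  have hRdeg : Rp.natDegree = n := by
    rw [hRp, Polynomial.natDegree_prod _ _ (fun k _ => hfac_ne k)]
    simp [hfac_deg, hcard]
  have hRlead : Rp.leadingCoeff = 2 ^ n := by
    rw [hRp, Polynomial.leadingCoeff_prod]
    rw [Finset.prod_congr rfl (fun k _ => ?_), Finset.prod_const, hcard]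
    rw [Polynomial.leadingCoeff_mul, Polynomial.leadingCoeff_C,
      (Polynomial.monic_X_sub_C (r k)).leadingCoeff, mul_one]
  have hRcoeff : Rp.coeff n = 2 ^ n := by
    rw [← hRdeg] at hRlead ⊢
    exact hRlead
  -- coefficients of L
  have hUn := U_deg_coeff n
  have hcast : ((n : ℤ) - 1) = ((n - 1 : ℕ) : ℤ) := by omega
  have hUn1 := U_deg_coeff (n - 1)
  rw [← hcast] at hUn1
  have hLdeg : L.natDegree ≤ n := by
    refine le_trans (Polynomial.natDegree_add_le _ _) (max_le hUn.1 (le_trans hUn1.1 ?_))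
    omega
  have hLcoeff : L.coeff n = 2 ^ n := by
    rw [hL, Polynomial.coeff_add, hUn.2,
      Polynomial.coeff_eq_zero_of_natDegree_lt (lt_of_le_of_lt hUn1.1 (by omega)), add_zero]
  -- the difference is zero
  have hsub : L - Rp = 0 := by
    rcases eq_or_ne (L - Rp) 0 with h | h
    · exact h
    · set s : Finset ℝ := (Finset.Icc 1 n).image (fun k => r k) with hs
      have hscard : s.card = n := by
        rw [hs, Finset.card_image_of_injOn hinj, hcard]
      refine Polynomial.eq_zero_of_natDegree_lt_card_of_eval_eq_zero' _ s ?_ ?_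
      · intro x hx
        rw [hs, Finset.mem_image] at hx
        obtain ⟨k, hk, rfl⟩ := hx
        rw [Polynomial.eval_sub, hLroot k hk, hRroot k hk, sub_zero]
      · rw [hscard]
        have hle : (L - Rp).natDegree ≤ n :=
          le_trans (Polynomial.natDegree_sub_le _ _) (max_le hLdeg (le_of_eq hRdeg))
        refine lt_of_le_of_ne hle ?_
        intro hEq
        have hlc : (L - Rp).leadingCoeff ≠ 0 := Polynomial.leadingCoeff_ne_zero.mpr h
        rw [Polynomial.leadingCoeff, hEq, Polynomial.coeff_sub, hLcoeff, hRcoeff,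
          sub_self] at hlc
        exact hlc rfl
  have := sub_eq_zero.mp hsub
  rw [hL] at this
  exact this
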